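/- Let T be a tree with diametrical path P. If mr^-(T) = mr^-(P), then T is a centipede; moreover, if |P| is odd, then T is a regular centipede. -/

import Mathlib

open Matrix SimpleGraph

attribute [local instance] Classical.propDecidable

/-- The set of real skew-symmetric matrices whose off-diagonal zero-nonzero
pattern is described by the graph `G`. -/
def IsSkewRep {V : Type*} [Fintype V] (G : SimpleGraph V) (A : Matrix V V ℝ) : Prop :=
  Aᵀ = -A ∧ ∀ i j, i ≠ j → (A i j ≠ 0 ↔ G.Adj i j)

/-- The minimum skew rank of a simple graph. -/
noncomputable def minSkewRank {V : Type*} [Fintype V] (G : SimpleGraph V) : ℕ :=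
  sInf {r | ∃ A : Matrix V V ℝ, IsSkewRep G A ∧ A.rank = r}

/-- The maximum skew rank of a simple graph. -/
noncomputable def maxSkewRank {V : Type*} [Fintype V] (G : SimpleGraph V) : ℕ :=
  sSup {r | ∃ A : Matrix V V ℝ, IsSkewRep G A ∧ A.rank = r}

/-- The matching number of a simple graph. -/
noncomputable def matchNum {V : Type*} [Fintype V] (G : SimpleGraph V) : ℕ :=
  sSup {n | ∃ M : G.Subgraph, M.IsMatching ∧ M.edgeSet.ncard = n}

/-- `v` enumerates the vertices of an induced path `v 0 — v 1 — ⋯ — v (n-1)` in `T`. -/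
def IsInducedPathEnum {V : Type*} (T : SimpleGraph V) {n : ℕ} (v : Fin n → V) : Prop :=
  Function.Injective v ∧ ∀ i j : Fin n, T.Adj (v i) (v j) ↔ (pathGraph n).Adj i j

/-- `v` enumerates a diametrical path of `T`: an induced path of length `diam T`. -/
def IsDiametricalPathEnum {V : Type*} [Fintype V] (T : SimpleGraph V) {n : ℕ}
    (v : Fin n → V) : Prop :=
  IsInducedPathEnum T v ∧ n = T.diam + 1

/-- `T` is a centipede with spine the path enumerated by `v`: every vertex off
the spine is a pendant vertex (a leg) attached to a nonpendant spine vertex. -/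
def IsCentipedeOn {V : Type*} [Fintype V] (T : SimpleGraph V) {n : ℕ} (v : Fin n → V) : Prop :=
  ∀ w : V, w ∉ Set.range v →
    (T.neighborSet w).ncard = 1 ∧
    ∃ i : Fin n, T.Adj w (v i) ∧ i.val ≠ 0 ∧ i.val ≠ n - 1

/-- The spine vertex `v i` is a joint: it has a leg attached. -/
def IsJoint {V : Type*} (T : SimpleGraph V) {n : ℕ} (v : Fin n → V) (i : Fin n) : Prop :=
  ∃ w : V, w ∉ Set.range v ∧ T.Adj (v i) w

/-- The centipede is regular: no two consecutive spine vertices are joints. -/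
def IsRegularOn {V : Type*} (T : SimpleGraph V) {n : ℕ} (v : Fin n → V) : Prop :=
  ∀ i j : Fin n, IsJoint T v i → IsJoint T v j → i.val + 1 ≠ j.val

set_option linter.unusedSectionVars false

section RankTools

variable {V : Type*} [Fintype V]

lemma rank_ge_of_det_submatrix_ne_zero [DecidableEq V]
    {ι : Type*} [Fintype ι] [DecidableEq ι]
    (A : Matrix V V ℝ) (f : ι → V)
    (hdet : (A.submatrix f f).det ≠ 0) : Fintype.card ι ≤ A.rank := by
  set C := A.submatrix f f with hC
  have hU : IsUnit C := (Matrix.isUnit_iff_isUnit_det C).2 (isUnit_iff_ne_zero.2 hdet)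
  set c : ι → (V → ℝ) := fun j i => A i (f j) with hc
  have hli : LinearIndependent ℝ c := by
    have h2 : LinearIndependent ℝ (fun j => Cᵀ j) :=
      Matrix.linearIndependent_cols_iff_isUnit.2 hU
    have : (fun j => Cᵀ j) = (LinearMap.funLeft ℝ ℝ f) ∘ c := by
      funext j; funext i; rfl
    rw [this] at h2
    exact LinearIndependent.of_comp _ h2
  have hmem : ∀ j, c j ∈ LinearMap.range A.mulVecLin := by
    intro j
    refine ⟨Pi.single (f j) 1, ?_⟩
    simp [Matrix.mulVecLin_apply, Matrix.mulVec_single_one]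
    rfl
  set S := LinearMap.range A.mulVecLin
  set c' : ι → S := fun j => ⟨c j, hmem j⟩ with hc'
  have hli' : LinearIndependent ℝ c' := by
    apply LinearIndependent.of_comp S.subtype
    exact hli
  have := hli'.fintype_card_le_finrank
  simpa [Matrix.rank] using this

lemma two_mul_le_rank [DecidableEq V]
    (A : Matrix V V ℝ) (hskew : Aᵀ = -A) {m : ℕ} (a b : Fin m → V)
    (hd : ∀ r, A (a r) (b r) ≠ 0)
    (hu : ∀ r c : Fin m, r < c → A (a r) (b c) = 0)
    (hbb : ∀ r c : Fin m, A (b r) (b c) = 0) :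
    2 * m ≤ A.rank := by
  classical
  set f : Fin m ⊕ Fin m → V := Sum.elim a b with hf
  set B : Matrix (Fin m) (Fin m) ℝ := Matrix.of fun r c => A (a r) (b c) with hB
  set P : Matrix (Fin m) (Fin m) ℝ := Matrix.of fun r c => A (a r) (a c) with hP
  set D : Matrix (Fin m) (Fin m) ℝ := Matrix.of fun r c => A (b r) (a c) with hD
  have hCblocks : A.submatrix f f = Matrix.fromBlocks P B D 0 := by
    ext i j
    cases i <;> cases j <;> simp [hf, hB, hP, hD, Matrix.fromBlocks, hbb]
  have hdetB : B.det ≠ 0 := by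
    have htri : B.BlockTriangular OrderDual.toDual := by
      intro i j hij
      exact hu i j hij
    rw [Matrix.det_of_lowerTriangular B htri]
    exact Finset.prod_ne_zero_iff.2 fun i _ => hd i
  have hDeq : D = (-1 : ℝ) • Bᵀ := by
    ext r c
    have := congrFun (congrFun hskew (a c)) (b r)
    simp only [Matrix.transpose_apply, Matrix.neg_apply] at this
    simp [hD, hB, this]
  have hdetD : D.det ≠ 0 := by
    rw [hDeq, Matrix.det_smul, Matrix.det_transpose]
    simp only [Fintype.card_fin]
    exact mul_ne_zero (pow_ne_zero _ (by norm_num)) hdetB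
  have hdet : (A.submatrix f f).det ≠ 0 := by
    rw [hCblocks]
    have hswap : (Matrix.fromBlocks P B D (0 : Matrix (Fin m) (Fin m) ℝ)).submatrix
        id (Equiv.sumComm (Fin m) (Fin m)) = Matrix.fromBlocks B P 0 D := by
      ext i j
      cases i <;> cases j <;> rfl
    have hperm := Matrix.det_permute' (Equiv.sumComm (Fin m) (Fin m))
      (Matrix.fromBlocks P B D (0 : Matrix (Fin m) (Fin m) ℝ))
    rw [hswap, Matrix.det_fromBlocks_zero₂₁] at hperm
    intro h0
    rw [h0, mul_zero] at hperm
    exact (mul_ne_zero hdetB hdetD) hperm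
  have := rank_ge_of_det_submatrix_ne_zero A f hdet
  have h2 : Fintype.card (Fin m ⊕ Fin m) = 2 * m := by
    simp [Fintype.card_sum]; ring
  omega

end RankTools

section RepTools

variable {V : Type*} [Fintype V]

lemma exists_isSkewRep (G : SimpleGraph V) : ∃ A, IsSkewRep G A := by
  classical
  obtain ⟨e⟩ : Nonempty (V ≃ Fin (Fintype.card V)) := ⟨Fintype.equivFin V⟩
  refine ⟨fun i j => if G.Adj i j then (if (e i : ℕ) < e j then 1 else -1) else 0, ?_, ?_⟩
  · ext i j
    simp only [Matrix.transpose, Matrix.of_apply]; erw [Matrix.neg_apply]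
    by_cases h : G.Adj i j
    · have h' : G.Adj j i := h.symm
      have hne : (e i : ℕ) ≠ (e j : ℕ) := by
        intro hh
        exact h.ne (e.injective (Fin.ext hh))
      rcases hne.lt_or_gt with hlt | hlt <;>
        simp [h, h', hlt, not_lt.2 hlt.le, not_lt_of_gt hlt]
    · have h' : ¬ G.Adj j i := fun hh => h hh.symm
      simp [h, h']
  · intro i j hne
    by_cases h : G.Adj i j
    · simp only [h, if_true, iff_true]
      split_ifs <;> norm_num
    · simp [h]

lemma IsSkewRep.entry_ne_zero {G : SimpleGraph V} {A : Matrix V V ℝ}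
    (hA : IsSkewRep G A) {x y : V} (h : G.Adj x y) : A x y ≠ 0 :=
  (hA.2 x y h.ne).2 h

lemma IsSkewRep.entry_eq_zero {G : SimpleGraph V} {A : Matrix V V ℝ}
    (hA : IsSkewRep G A) {x y : V} (hne : x ≠ y) (h : ¬ G.Adj x y) : A x y = 0 := by
  by_contra h0
  exact h ((hA.2 x y hne).1 h0)

lemma IsSkewRep.diag_eq_zero {G : SimpleGraph V} {A : Matrix V V ℝ}
    (hA : IsSkewRep G A) (x : V) : A x x = 0 := by
  have := congrFun (congrFun hA.1 x) x
  simp only [Matrix.transpose_apply, Matrix.neg_apply] at this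
  linarith

lemma minSkewRank_le_card (G : SimpleGraph V) : minSkewRank G ≤ Fintype.card V := by
  obtain ⟨A, hA⟩ := exists_isSkewRep G
  have h1 : minSkewRank G ≤ A.rank := Nat.sInf_le ⟨A, hA, rfl⟩
  exact h1.trans (Matrix.rank_le_card_width A)

lemma le_minSkewRank {G : SimpleGraph V} {k : ℕ}
    (h : ∀ A : Matrix V V ℝ, IsSkewRep G A → k ≤ A.rank) : k ≤ minSkewRank G := by
  obtain ⟨A, hA⟩ := exists_isSkewRep G
  have hne : {r | ∃ A : Matrix V V ℝ, IsSkewRep G A ∧ A.rank = r}.Nonempty := ⟨A.rank, A, hA, rfl⟩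
  obtain ⟨B, hB, hBr⟩ := Nat.sInf_mem hne
  rw [minSkewRank, ← hBr]
  exact h B hB

end RepTools

section TreeTools

variable {V : Type*} {T : SimpleGraph V} {n : ℕ} {v : Fin n → V}

lemma spine_adj' (hv : IsInducedPathEnum T v) {i j : Fin n} (hij : i.val + 1 = j.val) :
    T.Adj (v i) (v j) := (hv.2 i j).2 (pathGraph_adj.2 (Or.inl hij))

lemma spine_walk (hv : IsInducedPathEnum T v) :
    ∀ (d : ℕ) (i j : Fin n), i.val + d = j.val →
    ∃ p : T.Walk (v i) (v j), p.IsPath ∧ p.length = d ∧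
      ∀ x ∈ p.support, ∃ k : Fin n, i ≤ k ∧ k ≤ j ∧ x = v k := by
  intro d
  induction d with
  | zero =>
    intro i j hij
    have : i = j := Fin.ext (by omega)
    subst this
    exact ⟨SimpleGraph.Walk.nil, by simp, by simp, by
      intro x hx
      simp only [SimpleGraph.Walk.support_nil, List.mem_singleton] at hx
      exact ⟨i, le_refl _, le_refl _, hx⟩⟩
  | succ d ih =>
    intro i j hij
    have hi1 : i.val + 1 < n := by omega
    set i' : Fin n := ⟨i.val + 1, hi1⟩ with hi'
    obtain ⟨p, hp, hlen, hsupp⟩ := ih i' j (by simp [hi']; omega)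
    have hadj : T.Adj (v i) (v i') := spine_adj' hv (by simp [hi'])
    refine ⟨SimpleGraph.Walk.cons hadj p, ?_, by simp [hlen], ?_⟩
    · rw [SimpleGraph.Walk.cons_isPath_iff]
      refine ⟨hp, fun hmem => ?_⟩
      obtain ⟨k, hk1, hk2, hk3⟩ := hsupp _ hmem
      have := hv.1 hk3
      subst this
      have : i'.val ≤ i.val := hk1
      simp [hi'] at this
    · intro x hx
      rw [SimpleGraph.Walk.support_cons, List.mem_cons] at hx
      rcases hx with rfl | hx
      · exact ⟨i, le_refl i, by rw [Fin.le_def]; omega, rfl⟩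
      · obtain ⟨k, hk1, hk2, hk3⟩ := hsupp x hx
        rw [Fin.le_def] at hk1
        refine ⟨k, ?_, hk2, hk3⟩
        rw [Fin.le_def]
        simp only [hi'] at hk1
        omega

variable [Fintype V]

lemma tree_path_unique (hT : T.IsTree) {x y : V} (p q : T.Walk x y)
    (hp : p.IsPath) (hq : q.IsPath) : p = q := by
  have := isAcyclic_iff_path_unique.mp hT.2
  have h := this (⟨p, hp⟩ : T.Path x y) ⟨q, hq⟩
  exact congrArg Subtype.val h

lemma tree_path_length_eq_dist (hT : T.IsTree) {x y : V} (p : T.Walk x y)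
    (hp : p.IsPath) : p.length = T.dist x y := by
  obtain ⟨q, hq, hqlen⟩ := hT.1.exists_path_of_dist x y
  rw [tree_path_unique hT p q hp hq, hqlen]

lemma tree_dist_le_diam (hT : T.IsTree) [Nonempty V] (x y : V) :
    T.dist x y ≤ T.diam := by
  apply dist_le_diam
  obtain ⟨u, w, huw⟩ := exists_edist_eq_ediam_of_finite (G := T)
  rw [← huw]
  exact edist_ne_top_iff_reachable.2 (hT.1 u w)

lemma not_adj_endpoint (hT : T.IsTree) (hv : IsInducedPathEnum T v)
    (hdiam : n = T.diam + 1) {w : V} (hw : w ∉ Set.range v) {i : Fin n}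
    (hadj : T.Adj w (v i)) : i.val ≠ 0 ∧ i.val ≠ n - 1 := by
  have : Nonempty V := ⟨w⟩
  have hn : 1 ≤ n := i.pos
  constructor
  · intro h0
    have hl : n - 1 < n := by omega
    obtain ⟨p, hp, hlen, hsupp⟩ := spine_walk hv (n - 1 - i.val) i ⟨n-1, hl⟩ (by simp; omega)
    have hq : (SimpleGraph.Walk.cons hadj p).IsPath := by
      rw [SimpleGraph.Walk.cons_isPath_iff]
      refine ⟨hp, fun hmem => ?_⟩
      obtain ⟨k, _, _, hk⟩ := hsupp w hmem
      exact hw ⟨k, hk.symm⟩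
    have hdist := tree_path_length_eq_dist hT _ hq
    simp only [SimpleGraph.Walk.length_cons, hlen] at hdist
    have hle := tree_dist_le_diam hT w (v ⟨n-1, hl⟩)
    omega
  · intro hlast
    have h0 : (0 : ℕ) < n := by omega
    obtain ⟨p, hp, hlen, hsupp⟩ := spine_walk hv i.val ⟨0, h0⟩ i (by simp)
    have hq : (SimpleGraph.Walk.cons hadj p.reverse).IsPath := by
      rw [SimpleGraph.Walk.cons_isPath_iff]
      refine ⟨hp.reverse, fun hmem => ?_⟩
      rw [SimpleGraph.Walk.support_reverse, List.mem_reverse] at hmem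
      obtain ⟨k, _, _, hk⟩ := hsupp w hmem
      exact hw ⟨k, hk.symm⟩
    have hdist := tree_path_length_eq_dist hT _ hq
    simp only [SimpleGraph.Walk.length_cons, SimpleGraph.Walk.length_reverse, hlen] at hdist
    have hle := tree_dist_le_diam hT w (v ⟨0, h0⟩)
    omega

lemma spine_nbr_unique_aux (hT : T.IsTree) (hv : IsInducedPathEnum T v)
    {w : V} (hw : w ∉ Set.range v) {i j : Fin n}
    (hij : i.val < j.val) (h1 : T.Adj (v i) w) (h2 : T.Adj w (v j)) : False := by
  obtain ⟨p, hp, hlen, hsupp⟩ := spine_walk hv (j.val - i.val) i j (by omega)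
  have hvij : v i ≠ v j := fun h => by have := hv.1 h; omega
  set q : T.Walk (v i) (v j) :=
    SimpleGraph.Walk.cons h1 (SimpleGraph.Walk.cons h2 SimpleGraph.Walk.nil) with hq
  have hqp : q.IsPath := by
    rw [SimpleGraph.Walk.isPath_def]
    simp [hq]
    refine ⟨⟨fun h => hw ⟨i, h⟩, hvij⟩, fun h => hw ⟨j, h.symm⟩⟩
  have := tree_path_unique hT p q hp hqp
  have hwq : w ∈ q.support := by simp [hq]
  rw [← this] at hwq
  obtain ⟨k, _, _, hk⟩ := hsupp w hwq
  exact hw ⟨k, hk.symm⟩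

lemma spine_nbr_unique (hT : T.IsTree) (hv : IsInducedPathEnum T v)
    {w : V} (hw : w ∉ Set.range v) {i j : Fin n}
    (h1 : T.Adj (v i) w) (h2 : T.Adj (v j) w) : i = j := by
  rcases lt_trichotomy i.val j.val with h | h | h
  · exact absurd (spine_nbr_unique_aux hT hv hw h h1 h2.symm) not_false
  · exact Fin.ext h
  · exact absurd (spine_nbr_unique_aux hT hv hw h h2 h1.symm) not_false

lemma no_chain_aux (hT : T.IsTree) (hv : IsInducedPathEnum T v)
    {w x : V} (hw : w ∉ Set.range v) (hx : x ∉ Set.range v) (hwx : w ≠ x)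
    {i j : Fin n} (hij : i.val < j.val)
    (h1 : T.Adj (v i) w) (h2 : T.Adj w x) (h3 : T.Adj x (v j)) : False := by
  obtain ⟨p, hp, hlen, hsupp⟩ := spine_walk hv (j.val - i.val) i j (by omega)
  have hvij : v i ≠ v j := fun h => by have := hv.1 h; omega
  set q : T.Walk (v i) (v j) :=
    SimpleGraph.Walk.cons h1 (SimpleGraph.Walk.cons h2
      (SimpleGraph.Walk.cons h3 SimpleGraph.Walk.nil)) with hq
  have hqp : q.IsPath := by
    rw [SimpleGraph.Walk.isPath_def]
    simp [hq]
    exact ⟨⟨fun h => hw ⟨i, h⟩, fun h => hx ⟨i, h⟩, hvij⟩,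
      ⟨hwx, fun h => hw ⟨j, h.symm⟩⟩, fun h => hx ⟨j, h.symm⟩⟩
  have := tree_path_unique hT p q hp hqp
  have hwq : w ∈ q.support := by simp [hq]
  rw [← this] at hwq
  obtain ⟨k, _, _, hk⟩ := hsupp w hwq
  exact hw ⟨k, hk.symm⟩

lemma no_chain (hT : T.IsTree) (hv : IsInducedPathEnum T v)
    {w x : V} (hw : w ∉ Set.range v) (hx : x ∉ Set.range v) (hwx : w ≠ x)
    {i j : Fin n} (hij : i ≠ j)
    (h1 : T.Adj (v i) w) (h2 : T.Adj w x) (h3 : T.Adj x (v j)) : False := by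
  rcases lt_trichotomy i.val j.val with h | h | h
  · exact no_chain_aux hT hv hw hx hwx h h1 h2 h3
  · exact hij (Fin.ext h)
  · exact no_chain_aux hT hv hx hw hwx.symm h h3.symm h2.symm h1.symm

lemma no_triangle (hT : T.IsTree) (hv : IsInducedPathEnum T v)
    {w x : V} (hw : w ∉ Set.range v) (hx : x ∉ Set.range v) (hwx : w ≠ x)
    {i : Fin n} (h1 : T.Adj (v i) w) (h2 : T.Adj w x) (h3 : T.Adj (v i) x) : False := by
  set p : T.Walk (v i) x := SimpleGraph.Walk.cons h3 SimpleGraph.Walk.nil with hpd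
  set q : T.Walk (v i) x :=
    SimpleGraph.Walk.cons h1 (SimpleGraph.Walk.cons h2 SimpleGraph.Walk.nil) with hqd
  have hpp : p.IsPath := by
    rw [SimpleGraph.Walk.isPath_def]; simp [hpd]
    exact fun h => hx ⟨i, h⟩
  have hqp : q.IsPath := by
    rw [SimpleGraph.Walk.isPath_def]; simp [hqd]
    exact ⟨⟨fun h => hw ⟨i, h⟩, fun h => hx ⟨i, h⟩⟩, hwx⟩
  have := tree_path_unique hT p q hpp hqp
  have : p.length = q.length := by rw [this]
  simp [hpd, hqd] at this

lemma exists_adj_of_ne (hT : T.IsTree) {x y : V} (hxy : x ≠ y) : ∃ z, T.Adj x z := by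
  obtain ⟨p⟩ := hT.1 x y
  cases p with
  | nil => exact absurd rfl hxy
  | cons h p => exact ⟨_, h⟩

end TreeTools

section Scenarios

variable {V : Type*} [Fintype V] {T : SimpleGraph V} {n : ℕ} {v : Fin n → V}
  {A : Matrix V V ℝ}

lemma entry_spine_zero (hv : IsInducedPathEnum T v) (hA : IsSkewRep T A) {i j : Fin n}
    (h0 : i.val ≠ j.val) (h1 : i.val + 1 ≠ j.val) (h2 : j.val + 1 ≠ i.val) :
    A (v i) (v j) = 0 := by
  apply hA.entry_eq_zero
  · exact fun h => h0 (congrArg Fin.val (hv.1 h))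
  · intro hadj
    rcases pathGraph_adj.1 ((hv.2 _ _).1 hadj) with hh | hh <;> omega

lemma scenario1 (hv : IsInducedPathEnum T v)
    {u x : V} (hux : T.Adj u x) (hxv : ∀ k : Fin n, x ≠ v k)
    (hxs : ∀ k : Fin n, ¬ T.Adj x (v k))
    (hA : IsSkewRep T A) : 2 * (n / 2 + 1) ≤ A.rank := by
  classical
  set m := n / 2 with hm
  have hb2 : ∀ r : Fin (m+1), r.val < m → 2 * r.val + 1 < n := by
    intro r hr; omega
  have hb1 : ∀ r : Fin (m+1), r.val < m → 2 * r.val < n := by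
    intro r hr; omega
  set a : Fin (m+1) → V := fun r => if h : r.val < m then v ⟨2*r.val, hb1 r h⟩ else u with ha
  set b : Fin (m+1) → V := fun r => if h : r.val < m then v ⟨2*r.val+1, hb2 r h⟩ else x with hb
  apply two_mul_le_rank A hA.1 a b
  · intro r
    by_cases hr : r.val < m
    · simp only [ha, hb, dif_pos hr]
      exact hA.entry_ne_zero (spine_adj' hv (by simp))
    · simp only [ha, hb, dif_neg hr]
      exact hA.entry_ne_zero hux
  · intro r c hrc
    have hrc' : r.val < c.val := hrc
    by_cases hc : c.val < m
    · have hr : r.val < m := by omega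
      simp only [ha, hb, dif_pos hr, dif_pos hc]
      exact entry_spine_zero hv hA (by simp; omega) (by simp; omega) (by simp; omega)
    · have hr : r.val < m := by omega
      simp only [ha, hb, dif_pos hr, dif_neg hc]
      exact hA.entry_eq_zero (fun h => hxv _ h.symm) (fun h => hxs _ h.symm)
  · intro r c
    by_cases hr : r.val < m <;> by_cases hc : c.val < m
    · simp only [hb, dif_pos hr, dif_pos hc]
      by_cases hrc : r.val = c.val
      · have : (⟨2*r.val+1, hb2 r hr⟩ : Fin n) = ⟨2*c.val+1, hb2 c hc⟩ := by
          simp [hrc]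
        rw [this]
        exact hA.diag_eq_zero _
      · exact entry_spine_zero hv hA (by simp; omega) (by simp; omega) (by simp; omega)
    · simp only [hb, dif_pos hr, dif_neg hc]
      exact hA.entry_eq_zero (fun h => hxv _ h.symm) (fun h => hxs _ h.symm)
    · simp only [hb, dif_neg hr, dif_pos hc]
      exact hA.entry_eq_zero (hxv _) (hxs _)
    · simp only [hb, dif_neg hr, dif_neg hc]
      exact hA.diag_eq_zero _

lemma scenario2 (hv : IsInducedPathEnum T v)
    {mm p q : ℕ} (hn : n = 2 * mm + 1) (hpn : 2 * p + 1 < n) (hqn : q < n)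
    (hq : q = 2 * p ∨ q = 2 * p + 2)
    {L M : V} (hL : ∀ k : Fin n, L ≠ v k) (hM : ∀ k : Fin n, M ≠ v k)
    (hLs : ∀ k : Fin n, T.Adj L (v k) → k.val = 2 * p + 1)
    (hMs : ∀ k : Fin n, T.Adj M (v k) → k.val = q)
    (hLM : ¬ T.Adj L M) (hLMne : L ≠ M)
    (hadjL : T.Adj (v ⟨2 * p + 1, hpn⟩) L)
    (hadjM : T.Adj (v ⟨q, hqn⟩) M)
    (hA : IsSkewRep T A) : 2 * (mm + 1) ≤ A.rank := by
  classical
  have hpm : p + 1 ≤ mm := by omega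
  have hbp : ∀ r : Fin (mm+1), r.val ≤ p → 2 * r.val + 1 < n := by intro r hr; omega
  have hbs : ∀ r : Fin (mm+1), p < r.val → r.val < mm → 2 * (mm + p - r.val) + 1 < n := by
    intro r h1 h2; omega
  have hba : ∀ r : Fin (mm+1), r.val < p → 2 * r.val < n := by intro r hr; omega
  have hbs' : ∀ r : Fin (mm+1), p < r.val → r.val < mm → 2 * (mm + p + 1 - r.val) < n := by
    intro r h1 h2; omega
  set a : Fin (mm+1) → V := fun r =>
    if h1 : r.val < p then v ⟨2 * r.val, hba r h1⟩
    else if h2 : r.val = p then L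
    else if h3 : r.val < mm then v ⟨2 * (mm + p + 1 - r.val), hbs' r (by omega) h3⟩
    else v ⟨q, hqn⟩ with ha
  set b : Fin (mm+1) → V := fun c =>
    if h1 : c.val ≤ p then v ⟨2 * c.val + 1, hbp c h1⟩
    else if h3 : c.val < mm then v ⟨2 * (mm + p - c.val) + 1, hbs c (by omega) h3⟩
    else M with hb
  apply two_mul_le_rank A hA.1 a b
  · intro r
    by_cases h1 : r.val < p
    · simp only [ha, hb, dif_pos h1, dif_pos (le_of_lt h1)]
      exact hA.entry_ne_zero (spine_adj' hv (by simp))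
    · by_cases h2 : r.val = p
      · simp only [ha, hb, dif_neg h1, dif_pos h2, dif_pos (le_of_eq h2)]
        have : (⟨2 * r.val + 1, hbp r (le_of_eq h2)⟩ : Fin n) = ⟨2 * p + 1, hpn⟩ := by
          simp [h2]
        rw [this]
        exact hA.entry_ne_zero hadjL.symm
      · by_cases h3 : r.val < mm
        · simp only [ha, hb, dif_neg h1, dif_neg h2, dif_pos h3,
            dif_neg (show ¬ r.val ≤ p by omega)]
          apply hA.entry_ne_zero
          exact (spine_adj' hv (by simp; omega)).symm
        · simp only [ha, hb, dif_neg h1, dif_neg h2, dif_neg h3,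
            dif_neg (show ¬ r.val ≤ p by omega)]
          exact hA.entry_ne_zero hadjM
  · intro r c hrc
    have hrc' : r.val < c.val := hrc
    have hcpos : 0 < c.val := by omega
    by_cases h1 : r.val < p
    · simp only [ha, dif_pos h1]
      by_cases g1 : c.val ≤ p
      · simp only [hb, dif_pos g1]
        exact entry_spine_zero hv hA (by simp; omega) (by simp; omega) (by simp; omega)
      · by_cases g3 : c.val < mm
        · simp only [hb, dif_neg g1, dif_pos g3]
          exact entry_spine_zero hv hA (by simp; omega) (by simp; omega) (by simp; omega)
        · simp only [hb, dif_neg g1, dif_neg g3]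
          refine hA.entry_eq_zero (fun h => hM _ h.symm) (fun h => ?_)
          have := hMs _ h.symm
          simp at this
          omega
    · by_cases h2 : r.val = p
      · simp only [ha, dif_neg h1, dif_pos h2]
        by_cases g1 : c.val ≤ p
        · omega
        · by_cases g3 : c.val < mm
          · simp only [hb, dif_neg g1, dif_pos g3]
            refine hA.entry_eq_zero (hL _) (fun h => ?_)
            have := hLs _ h
            simp at this
            omega
          · simp only [hb, dif_neg g1, dif_neg g3]
            exact hA.entry_eq_zero hLMne hLM
      · by_cases h3 : r.val < mm
        · simp only [ha, dif_neg h1, dif_neg h2, dif_pos h3]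
          have g1 : ¬ c.val ≤ p := by omega
          by_cases g3 : c.val < mm
          · simp only [hb, dif_neg g1, dif_pos g3]
            exact entry_spine_zero hv hA (by simp; omega) (by simp; omega) (by simp; omega)
          · simp only [hb, dif_neg g1, dif_neg g3]
            refine hA.entry_eq_zero (fun h => hM _ h.symm) (fun h => ?_)
            have := hMs _ h.symm
            simp at this
            omega
        · omega
  · intro r c
    by_cases g1 : r.val ≤ p <;> by_cases g1' : c.val ≤ p
    · simp only [hb, dif_pos g1, dif_pos g1']
      by_cases hrc : r.val = c.val
      · have : (⟨2 * r.val + 1, hbp r g1⟩ : Fin n) = ⟨2 * c.val + 1, hbp c g1'⟩ := by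
          simp [hrc]
        rw [this]
        exact hA.diag_eq_zero _
      · exact entry_spine_zero hv hA (by simp; omega) (by simp; omega) (by simp; omega)
    · by_cases g3' : c.val < mm
      · simp only [hb, dif_pos g1, dif_neg g1', dif_pos g3']
        exact entry_spine_zero hv hA (by simp; omega) (by simp; omega) (by simp; omega)
      · simp only [hb, dif_pos g1, dif_neg g1', dif_neg g3']
        refine hA.entry_eq_zero (fun h => hM _ h.symm) (fun h => ?_)
        have := hMs _ h.symm
        simp at this
        omega
    · by_cases g3 : r.val < mm
      · simp only [hb, dif_neg g1, dif_pos g3, dif_pos g1']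
        exact entry_spine_zero hv hA (by simp; omega) (by simp; omega) (by simp; omega)
      · simp only [hb, dif_neg g1, dif_neg g3, dif_pos g1']
        refine hA.entry_eq_zero (hM _) (fun h => ?_)
        have := hMs _ h
        simp at this
        omega
    · by_cases g3 : r.val < mm <;> by_cases g3' : c.val < mm
      · simp only [hb, dif_neg g1, dif_pos g3, dif_neg g1', dif_pos g3']
        by_cases hrc : r.val = c.val
        · have : (⟨2 * (mm + p - r.val) + 1, hbs r (by omega) g3⟩ : Fin n) =
              ⟨2 * (mm + p - c.val) + 1, hbs c (by omega) g3'⟩ := by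
            simp [hrc]
          rw [this]
          exact hA.diag_eq_zero _
        · exact entry_spine_zero hv hA (by simp; omega) (by simp; omega) (by simp; omega)
      · simp only [hb, dif_neg g1, dif_pos g3, dif_neg g1', dif_neg g3']
        refine hA.entry_eq_zero (fun h => hM _ h.symm) (fun h => ?_)
        have := hMs _ h.symm
        simp at this
        omega
      · simp only [hb, dif_neg g1, dif_neg g3, dif_neg g1', dif_pos g3']
        refine hA.entry_eq_zero (hM _) (fun h => ?_)
        have := hMs _ h
        simp at this
        omega
      · simp only [hb, dif_neg g1, dif_neg g3, dif_neg g1', dif_neg g3']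
        exact hA.diag_eq_zero _

end Scenarios

/-- If `T` is a tree with diametrical path `P` (enumerated by `v`) such that
`mr⁻(T) = mr⁻(P)`, then `T` is a centipede; moreover if `|P|` is odd then `T`
is a regular centipede. -/
theorem centipede_of_minSkewRank_eq {V : Type*} [Fintype V] (T : SimpleGraph V)
    (hT : T.IsTree) {n : ℕ} (v : Fin n → V) (hv : IsDiametricalPathEnum T v)
    (h : minSkewRank T = minSkewRank (pathGraph n)) :
    IsCentipedeOn T v ∧ (Odd n → IsRegularOn T v) := by
  obtain ⟨hvp, hdiam⟩ := hv
  have hn1 : 1 ≤ n := by omega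
  have hpathle : minSkewRank (pathGraph n) ≤ n := by
    have := minSkewRank_le_card (pathGraph n)
    simpa using this
  have hcontra : ∀ k : ℕ, n < k → k ≤ minSkewRank T → False := by
    intro k hk hle
    rw [h] at hle
    omega
  -- scenario 1 eliminator
  have hS1 : ∀ u x : V, T.Adj u x → (∀ k : Fin n, x ≠ v k) →
      (∀ k : Fin n, ¬ T.Adj x (v k)) → False := by
    intro u x h1 h2 h3
    have hge : 2 * (n / 2 + 1) ≤ minSkewRank T :=
      le_minSkewRank (fun A hA => scenario1 hvp h1 h2 h3 hA)
    exact hcontra _ (by omega) hge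
  constructor
  · -- centipede
    intro w hw
    have hwne : ∀ k : Fin n, w ≠ v k := fun k hk => hw ⟨k, hk.symm⟩
    by_cases hex : ∃ k : Fin n, T.Adj w (v k)
    · obtain ⟨k, hk⟩ := hex
      have hint := not_adj_endpoint hT hvp hdiam hw hk
      have huniq : ∀ y, T.Adj w y → y = v k := by
        intro y hy
        by_cases hyr : y ∈ Set.range v
        · obtain ⟨j, rfl⟩ := hyr
          exact congrArg v (spine_nbr_unique hT hvp hw hy.symm hk.symm)
        · have hyv : ∀ k' : Fin n, y ≠ v k' := fun k' hk' => hyr ⟨k', hk'.symm⟩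
          by_cases hys : ∃ j : Fin n, T.Adj y (v j)
          · obtain ⟨j, hj⟩ := hys
            by_cases hjk : j = k
            · subst hjk
              exact absurd (no_triangle hT hvp hw hyr (hy.ne) hk.symm hy hj.symm) not_false
            · exact absurd
                (no_chain hT hvp hw hyr (hy.ne) (Ne.symm hjk) hk.symm hy hj) not_false
          · exact absurd (hS1 w y hy hyv (fun j ha => hys ⟨j, ha⟩)) not_false
      refine ⟨?_, k, hk, hint.1, hint.2⟩
      have hset : T.neighborSet w = {v k} := by
        apply Set.eq_singleton_iff_unique_mem.2
        exact ⟨hk, fun y hy => huniq y hy⟩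
      rw [hset, Set.ncard_singleton]
    · have hwv0 : w ≠ v ⟨0, by omega⟩ := hwne _
      obtain ⟨z, hz⟩ := exists_adj_of_ne hT hwv0
      exact absurd (hS1 z w hz.symm hwne (fun j ha => hex ⟨j, ha⟩)) not_false
  · -- regular
    intro hodd i j hJi hJj heq
    obtain ⟨mm, hmm⟩ := hodd
    obtain ⟨w, hw, hwadj⟩ := hJi
    obtain ⟨w', hw', hw'adj⟩ := hJj
    have hwv : ∀ k : Fin n, w ≠ v k := fun k hk => hw ⟨k, hk.symm⟩
    have hw'v : ∀ k : Fin n, w' ≠ v k := fun k hk => hw' ⟨k, hk.symm⟩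
    have hij : i ≠ j := fun hh => by rw [hh] at heq; omega
    have hwne : w ≠ w' := by
      intro hh
      subst hh
      exact hij (spine_nbr_unique hT hvp hw hwadj hw'adj)
    have hnadj : ¬ T.Adj w w' := fun hh =>
      no_chain hT hvp hw hw' hwne hij hwadj hh hw'adj.symm
    have hws : ∀ k : Fin n, T.Adj w (v k) → k.val = i.val := by
      intro k hk
      exact congrArg Fin.val (spine_nbr_unique hT hvp hw hk.symm hwadj)
    have hw's : ∀ k : Fin n, T.Adj w' (v k) → k.val = j.val := by
      intro k hk
      exact congrArg Fin.val (spine_nbr_unique hT hvp hw' hk.symm hw'adj)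
    have hkey : 2 * (mm + 1) ≤ minSkewRank T := by
      apply le_minSkewRank
      intro A hA
      rcases Nat.even_or_odd i.val with he | ho
      · -- i even : i = 2p, legs: L := w' at 2p+1 = j, M := w at q = 2p = i
        obtain ⟨p, hp⟩ := he
        have hpn : 2 * p + 1 < n := by omega
        have hqn : 2 * p < n := by omega
        have hiv : i = (⟨2 * p, hqn⟩ : Fin n) := Fin.ext (by simpa using (by omega : i.val = 2 * p))
        have hjv : j = (⟨2 * p + 1, hpn⟩ : Fin n) := Fin.ext (by simp; omega)
        apply scenario2 hvp hmm hpn hqn (Or.inl rfl) hw'v hwv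
          (fun k hk => by rw [hw's k hk, hjv])
          (fun k hk => by rw [hws k hk, hiv])
          (fun hh => hnadj hh.symm) hwne.symm
          (by rw [← hjv]; exact hw'adj)
          (by rw [← hiv]; exact hwadj) hA
      · -- i odd : i = 2p+1, legs: L := w at 2p+1 = i, M := w' at q = 2p+2 = j
        obtain ⟨p, hp⟩ := ho
        have hpn : 2 * p + 1 < n := by omega
        have hqn : 2 * p + 2 < n := by omega
        have hiv : i = (⟨2 * p + 1, hpn⟩ : Fin n) := Fin.ext (by simp; omega)
        have hjv : j = (⟨2 * p + 2, hqn⟩ : Fin n) := Fin.ext (by simp; omega)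
        apply scenario2 hvp hmm hpn hqn (Or.inr rfl) hwv hw'v
          (fun k hk => by rw [hws k hk, hiv])
          (fun k hk => by rw [hw's k hk, hjv])
          hnadj hwne
          (by rw [← hiv]; exact hwadj)
          (by rw [← hjv]; exact hw'adj) hA
    exact hcontra _ (by omega) hkey
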